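/- Under assumptions (A1)-(A6), the multi-sample-split sequential rejection procedure satisfies P[R_i ⊆ F] ≥ (1−δ)^B − α for every i ∈ ℕ ∪ {∞}, where F = {C ∈ C : C ∩ S_0 ≠ ∅} is the collection of false null hypotheses. -/

import Mathlib

open MeasureTheory Finset

attribute [local instance] Classical.propDecidable

/-- The sequence of rejection sets: `R_0 = ∅`, `R_{i+1} = R_i ∪ N(R_i)`. -/
def rejSeq15 {H : Type*} (N : Set H → Set H) : ℕ → Set H
  | 0 => ∅
  | i + 1 => rejSeq15 N i ∪ N (rejSeq15 N i)


private lemma sum_lintegral_le15 {Ω : Type*} [MeasurableSpace Ω] (μ : MeasureTheory.Measure Ω)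
    {ι : Type*} (s : Finset ι) (f : ι → Ω → ENNReal) :
    ∑ i ∈ s, ∫⁻ ω, f i ω ∂μ ≤ ∫⁻ ω, ∑ i ∈ s, f i ω ∂μ := by
  classical
  induction s using Finset.induction with
  | empty => simp
  | @insert a s ha ih =>
    rw [Finset.sum_insert ha]
    refine le_trans (add_le_add le_rfl ih) ?_
    refine le_trans (MeasureTheory.le_lintegral_add _ _) (MeasureTheory.lintegral_mono fun ω => ?_)
    rw [Finset.sum_insert ha]

/-- FWER control of the multi sample-splitting sequential rejection
procedure under (A1)–(A6): for every step `i ∈ ℕ` (and for `R_∞ = ⋃ i, R_i`),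
`P[R_i ⊆ F] ≥ (1−δ)^B − α`, where `F = {C ∈ 𝒞 : C ∩ S_0 ≠ ∅}` is the collection of
false null hypotheses. The successor map is
`N(R) = {C ∈ 𝒞\R : aggr(p^{C,(1)} m_C^(1)(R), …, p^{C,(B)} m_C^(B)(R)) ≤ α}`. -/
theorem stmt15 {Ω : Type*} [MeasurableSpace Ω] (μ : Measure Ω) [IsProbabilityMeasure μ]
    (n p B : ℕ) (hB : 0 < B)
    (Cfam : Finset (Finset (Fin p)))
    (S0 : Finset (Fin p))
    (Shat : Fin B → Ω → Finset (Fin p))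
    (pv : Finset (Fin p) → Fin B → Ω → ℝ)
    (m : Finset (Fin p) → Fin B → Set (Finset (Fin p)) → Ω → ℝ)
    (aggr : (Fin B → ℝ) → ℝ)
    (α δ : ℝ) (hα : α ∈ Set.Ioo (0:ℝ) 1) (hδ : δ ∈ Set.Ioo (0:ℝ) 1)
    (F : Set (Finset (Fin p))) (hF : F = {C | C ∈ Cfam ∧ (C ∩ S0).Nonempty})
    -- p-values take values in [0,1], and equal 1 when the cluster misses the screened set
    (hpv01 : ∀ C b ω, pv C b ω ∈ Set.Icc (0:ℝ) 1)
    (hpv1 : ∀ C b ω, C ∩ Shat b ω = ∅ → pv C b ω = 1)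
    -- (A1) sparsity of the screened sets
    (hA1 : ∀ b ω, 2 * (Shat b ω).card < n)
    -- (A2) δ-screening property: screening succeeds in all B splits w.pr. ≥ (1−δ)^B
    (hA2 : ENNReal.ofReal ((1 - δ) ^ B) ≤ μ {ω | ∀ b, S0 ⊆ Shat b ω})
    -- the aggregation function is monotone increasing
    (haggr : Monotone aggr)
    -- multiplicity adjustments are ≥ 1
    (hm1 : ∀ C b R ω, 1 ≤ m C b R ω)
    -- (A4) monotonicity of the multiplicity adjustments
    (hA4 : ∀ C b (R S : Set (Finset (Fin p))) ω, R ⊆ S → m C b S ω ≤ m C b R ω)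
    -- (A5) single-step property
    (hA5 : ∀ ω b (R : Set (Finset (Fin p))),
      ∑ C ∈ Cfam, (if C ∉ R ∧ (C ∩ Shat b ω).Nonempty then 1 / m C b R ω else 0) ≤ 1)
    -- (A3) correct testing property: p-values of true nulls are superuniform
    (hA3 : ∀ C ∈ Cfam, C ∩ S0 = ∅ → ∀ b, ∀ u ∈ Set.Icc (0:ℝ) 1,
      μ {ω | pv C b ω ≤ u} ≤ ENNReal.ofReal u)
    -- (A6) aggregation property
    (hA6 : ∀ C ∈ Cfam, ∀ R : Set (Finset (Fin p)),
      (∀ b, ∀ u ∈ Set.Icc (0:ℝ) 1, μ {ω | pv C b ω ≤ u} ≤ ENNReal.ofReal u) →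
      ∀ u ∈ Set.Icc (0:ℝ) 1,
        μ {ω | aggr (fun b => pv C b ω * m C b R ω) ≤ u}
          ≤ ENNReal.ofReal (u / B) *
              ∑ b, ∫⁻ ω, ENNReal.ofReal
                (if (C ∩ Shat b ω).Nonempty then 1 / m C b R ω else 0) ∂μ) :
    (∀ i : ℕ,
      ENNReal.ofReal ((1 - δ) ^ B - α)
        ≤ μ {ω | rejSeq15 (fun R =>
            {C | C ∈ Cfam ∧ C ∉ R ∧ aggr (fun b => pv C b ω * m C b R ω) ≤ α}) i ⊆ F}) ∧
    ENNReal.ofReal ((1 - δ) ^ B - α)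
      ≤ μ {ω | (⋃ i, rejSeq15 (fun R =>
          {C | C ∈ Cfam ∧ C ∉ R ∧ aggr (fun b => pv C b ω * m C b R ω) ≤ α}) i) ⊆ F} := by

  -- Notation
  set T : Finset (Finset (Fin p)) := Cfam.filter (fun C => C ∩ S0 = ∅) with hTdef
  have hTnotF : ∀ C ∈ T, C ∉ F := by
    intro C hC hCF
    rw [hF] at hCF
    obtain ⟨-, hne⟩ := hCF
    rw [(Finset.mem_filter.1 hC).2] at hne
    exact Finset.not_nonempty_empty hne
  -- Step 1: the bad event is contained in the union of false-rejection events of true nulls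
  have step1 : {ω | ¬ ((⋃ i, rejSeq15 (fun R =>
          {C | C ∈ Cfam ∧ C ∉ R ∧ aggr (fun b => pv C b ω * m C b R ω) ≤ α}) i) ⊆ F)}
      ⊆ ⋃ C ∈ T, {ω | aggr (fun b => pv C b ω * m C b F ω) ≤ α} := by
    intro ω hω
    simp only [Set.mem_setOf_eq] at hω
    set Nω : Set (Finset (Fin p)) → Set (Finset (Fin p)) := fun R =>
      {C | C ∈ Cfam ∧ C ∉ R ∧ aggr (fun b => pv C b ω * m C b R ω) ≤ α} with hNdef
    obtain ⟨x, hx, hxF⟩ := Set.not_subset.1 hω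
    obtain ⟨i, hxi⟩ := Set.mem_iUnion.1 hx
    have hex : ∃ i, ¬ (rejSeq15 Nω i ⊆ F) := ⟨i, fun h => hxF (h hxi)⟩
    have hj : ¬ (rejSeq15 Nω (Nat.find hex) ⊆ F) := Nat.find_spec hex
    have hj0 : Nat.find hex ≠ 0 := by
      intro h
      rw [h] at hj
      exact hj (by intro y hy; exact absurd hy (by simp [rejSeq15]))
    obtain ⟨k, hk⟩ := Nat.exists_eq_succ_of_ne_zero hj0
    have hkF : rejSeq15 Nω k ⊆ F := by
      by_contra h
      have := Nat.find_min' hex h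
      omega
    rw [hk] at hj
    obtain ⟨C, hC, hCF⟩ := Set.not_subset.1 hj
    have hCk : C ∉ rejSeq15 Nω k := fun h => hCF (hkF h)
    have hCN : C ∈ Nω (rejSeq15 Nω k) := by
      have hC' : C ∈ rejSeq15 Nω k ∪ Nω (rejSeq15 Nω k) := hC
      rcases hC' with h | h
      · exact absurd h hCk
      · exact h
    obtain ⟨hCfam, -, hrej⟩ := hCN
    have hCS0 : C ∩ S0 = ∅ := by
      by_contra h
      exact hCF (by rw [hF]; exact ⟨hCfam, Finset.nonempty_iff_ne_empty.2 h⟩)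
    refine Set.mem_iUnion₂.2 ⟨C, Finset.mem_filter.2 ⟨hCfam, hCS0⟩, ?_⟩
    have hle : (fun b => pv C b ω * m C b F ω) ≤ (fun b => pv C b ω * m C b (rejSeq15 Nω k) ω) :=
      fun b => mul_le_mul_of_nonneg_left (hA4 C b _ F ω hkF) (hpv01 C b ω).1
    exact le_trans (haggr hle) hrej
  -- Step 3: bound each false-rejection event by (A6)
  have step3 : ∀ C ∈ T, μ {ω | aggr (fun b => pv C b ω * m C b F ω) ≤ α}
      ≤ ENNReal.ofReal (α / B) * ∑ b, ∫⁻ ω, ENNReal.ofReal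
          (if (C ∩ Shat b ω).Nonempty then 1 / m C b F ω else 0) ∂μ := by
    intro C hC
    obtain ⟨hCfam, hCS0⟩ := Finset.mem_filter.1 hC
    exact hA6 C hCfam F (fun b u hu => hA3 C hCfam hCS0 b u hu) α ⟨hα.1.le, hα.2.le⟩
  -- Step 4: the sum of the bounds is at most α, using (A5)
  have hsumInt : ∀ b : Fin B, ∫⁻ ω, ∑ C ∈ T, ENNReal.ofReal
      (if (C ∩ Shat b ω).Nonempty then 1 / m C b F ω else 0) ∂μ ≤ 1 := by
    intro b
    have hpt : ∀ ω, ∑ C ∈ T, ENNReal.ofReal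
        (if (C ∩ Shat b ω).Nonempty then 1 / m C b F ω else 0) ≤ 1 := by
      intro ω
      have hnn : ∀ C ∈ T, (0:ℝ) ≤ (if (C ∩ Shat b ω).Nonempty then 1 / m C b F ω else 0) := by
        intro C _
        split_ifs with h
        · exact div_nonneg zero_le_one (le_trans zero_le_one (hm1 C b F ω))
        · exact le_rfl
      rw [← ENNReal.ofReal_sum_of_nonneg hnn]
      have h1 : ∑ C ∈ T, (if (C ∩ Shat b ω).Nonempty then 1 / m C b F ω else 0)
          ≤ ∑ C ∈ Cfam, (if C ∉ F ∧ (C ∩ Shat b ω).Nonempty then 1 / m C b F ω else 0) := by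
        have heq : ∀ C ∈ T, (if (C ∩ Shat b ω).Nonempty then 1 / m C b F ω else 0)
            = (if C ∉ F ∧ (C ∩ Shat b ω).Nonempty then 1 / m C b F ω else 0) := by
          intro C hC
          have := hTnotF C hC
          by_cases hne : (C ∩ Shat b ω).Nonempty <;> simp [hne, this]
        rw [Finset.sum_congr rfl heq]
        refine Finset.sum_le_sum_of_subset_of_nonneg (Finset.filter_subset _ _) ?_
        intro C _ _
        split_ifs with h
        · exact div_nonneg zero_le_one (le_trans zero_le_one (hm1 C b F ω))
        · exact le_rfl
      calc ENNReal.ofReal (∑ C ∈ T, (if (C ∩ Shat b ω).Nonempty then 1 / m C b F ω else 0))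
          ≤ ENNReal.ofReal 1 := ENNReal.ofReal_le_ofReal (le_trans h1 (hA5 ω b F))
        _ = 1 := ENNReal.ofReal_one
    calc ∫⁻ ω, ∑ C ∈ T, ENNReal.ofReal
          (if (C ∩ Shat b ω).Nonempty then 1 / m C b F ω else 0) ∂μ
        ≤ ∫⁻ _, 1 ∂μ := lintegral_mono hpt
      _ = 1 := by simp
  have step4 : ∑ C ∈ T, (ENNReal.ofReal (α / B) * ∑ b, ∫⁻ ω, ENNReal.ofReal
        (if (C ∩ Shat b ω).Nonempty then 1 / m C b F ω else 0) ∂μ) ≤ ENNReal.ofReal α := by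
    rw [← Finset.mul_sum]
    calc ENNReal.ofReal (α / B) * ∑ C ∈ T, ∑ b, ∫⁻ ω, ENNReal.ofReal
          (if (C ∩ Shat b ω).Nonempty then 1 / m C b F ω else 0) ∂μ
        ≤ ENNReal.ofReal (α / B) * ∑ _b : Fin B, (1:ENNReal) := by
          refine mul_le_mul' le_rfl ?_
          rw [Finset.sum_comm]
          exact Finset.sum_le_sum fun b _ => le_trans (sum_lintegral_le15 μ T _) (hsumInt b)
      _ = ENNReal.ofReal (α / B) * (B : ENNReal) := by simp
      _ = ENNReal.ofReal α := by
          rw [← ENNReal.ofReal_natCast B,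
            ← ENNReal.ofReal_mul (div_nonneg hα.1.le (Nat.cast_nonneg B))]
          congr 1
          field_simp
  -- Combine: the bad event has measure at most α
  have hbad : μ {ω | ¬ ((⋃ i, rejSeq15 (fun R =>
        {C | C ∈ Cfam ∧ C ∉ R ∧ aggr (fun b => pv C b ω * m C b R ω) ≤ α}) i) ⊆ F)}
      ≤ ENNReal.ofReal α :=
    le_trans (measure_mono step1) (le_trans (measure_biUnion_finset_le T _)
      (le_trans (Finset.sum_le_sum step3) step4))
  -- Hence the good event has measure at least 1 - α ≥ (1-δ)^B - α
  have hgood : ENNReal.ofReal ((1 - δ) ^ B - α)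
      ≤ μ {ω | (⋃ i, rejSeq15 (fun R =>
          {C | C ∈ Cfam ∧ C ∉ R ∧ aggr (fun b => pv C b ω * m C b R ω) ≤ α}) i) ⊆ F} := by
    have hone : (1:ENNReal) ≤ μ {ω | (⋃ i, rejSeq15 (fun R =>
          {C | C ∈ Cfam ∧ C ∉ R ∧ aggr (fun b => pv C b ω * m C b R ω) ≤ α}) i) ⊆ F}
        + μ {ω | ¬ ((⋃ i, rejSeq15 (fun R =>
          {C | C ∈ Cfam ∧ C ∉ R ∧ aggr (fun b => pv C b ω * m C b R ω) ≤ α}) i) ⊆ F)} := by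
      calc (1:ENNReal) = μ Set.univ := measure_univ.symm
        _ ≤ μ ({ω | (⋃ i, rejSeq15 (fun R =>
              {C | C ∈ Cfam ∧ C ∉ R ∧ aggr (fun b => pv C b ω * m C b R ω) ≤ α}) i) ⊆ F}
            ∪ {ω | ¬ ((⋃ i, rejSeq15 (fun R =>
              {C | C ∈ Cfam ∧ C ∉ R ∧ aggr (fun b => pv C b ω * m C b R ω) ≤ α}) i) ⊆ F)}) := by
            refine measure_mono fun ω _ => ?_
            by_cases h : (⋃ i, rejSeq15 (fun R =>
              {C | C ∈ Cfam ∧ C ∉ R ∧ aggr (fun b => pv C b ω * m C b R ω) ≤ α}) i) ⊆ F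
            · exact Or.inl h
            · exact Or.inr h
        _ ≤ _ := measure_union_le _ _
    have h2 : (1:ENNReal) - ENNReal.ofReal α ≤ μ {ω | (⋃ i, rejSeq15 (fun R =>
          {C | C ∈ Cfam ∧ C ∉ R ∧ aggr (fun b => pv C b ω * m C b R ω) ≤ α}) i) ⊆ F} := by
      rw [tsub_le_iff_right]
      exact le_trans hone (add_le_add le_rfl hbad)
    have hpow : (1 - δ) ^ B ≤ 1 :=
      pow_le_one₀ (by linarith [hδ.2]) (by linarith [hδ.1])
    calc ENNReal.ofReal ((1 - δ) ^ B - α) ≤ ENNReal.ofReal (1 - α) :=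
          ENNReal.ofReal_le_ofReal (by linarith)
      _ = 1 - ENNReal.ofReal α := by rw [ENNReal.ofReal_sub _ hα.1.le, ENNReal.ofReal_one]
      _ ≤ _ := h2
  refine ⟨fun i => le_trans hgood (measure_mono fun ω h => ?_), hgood⟩
  exact fun x hx => h (Set.mem_iUnion.2 ⟨i, hx⟩)
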